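/- If Q is a traceless quadratic form on ℝ³ of rank 3 and g is a line through the origin contained in the cone {x : Q(x) = 0}, then there exist lines g₁ and g₂ also contained in the cone such that g, g₁, g₂ are mutually orthogonal. -/

import Mathlib

open Matrix

private lemma dot_self_pos (v : Fin 3 → ℝ) (hv : v ≠ 0) : 0 < v ⬝ᵥ v := by
  have h1 : 0 ≤ v ⬝ᵥ v := by
    simp only [dotProduct, Fin.sum_univ_three]
    nlinarith [sq_nonneg (v 0), sq_nonneg (v 1), sq_nonneg (v 2)]
  rcases h1.lt_or_eq with h | h
  · exact h
  · exact absurd (dotProduct_self_eq_zero.mp h.symm) hv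

private lemma exists_perp (v : Fin 3 → ℝ) : ∃ w : Fin 3 → ℝ, w ≠ 0 ∧ v ⬝ᵥ w = 0 := by
  by_cases h0 : v 0 = 0
  · refine ⟨![1,0,0], ?_, ?_⟩
    · intro h; have := congrFun h 0; simp at this
    · simp [dotProduct, Fin.sum_univ_three, h0]
  · refine ⟨![v 1, -v 0, 0], ?_, ?_⟩
    · intro h; have := congrFun h 1; simp at this; exact h0 this
    · simp [dotProduct, Fin.sum_univ_three]; ring

set_option maxHeartbeats 1000000 in
/-- If `Q(x) = xᵀ M x` is a traceless quadratic form of rank `3` on `ℝ³` and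
`g = ℝ·v` is a line (through the origin) on the equilateral cone `Q(x) = 0`,
then there are lines `g₁ = ℝ·v₁` and `g₂ = ℝ·v₂` on the cone such that
`g`, `g₁`, `g₂` are mutually orthogonal. -/
theorem stmt_12 (M : Matrix (Fin 3) (Fin 3) ℝ) (hsymm : M.IsSymm)
    (htr : M.trace = 0) (hrank : M.rank = 3)
    (v : Fin 3 → ℝ) (hv : v ≠ 0) (hvQ : v ⬝ᵥ M.mulVec v = 0) :
    ∃ v₁ v₂ : Fin 3 → ℝ, v₁ ≠ 0 ∧ v₂ ≠ 0 ∧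
      v₁ ⬝ᵥ M.mulVec v₁ = 0 ∧ v₂ ⬝ᵥ M.mulVec v₂ = 0 ∧
      v ⬝ᵥ v₁ = 0 ∧ v ⬝ᵥ v₂ = 0 ∧ v₁ ⬝ᵥ v₂ = 0 := by
  obtain ⟨w, hw, hvw⟩ := exists_perp v
  set c : Fin 3 → ℝ := ![v 1 * w 2 - v 2 * w 1, v 2 * w 0 - v 0 * w 2, v 0 * w 1 - v 1 * w 0] with hc
  have h01 : M 1 0 = M 0 1 := hsymm.apply 0 1
  have h02 : M 2 0 = M 0 2 := hsymm.apply 0 2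
  have h12 : M 2 1 = M 1 2 := hsymm.apply 1 2
  have htr' : M 0 0 + M 1 1 + M 2 2 = 0 := by
    simpa [Matrix.trace, Matrix.diag, Fin.sum_univ_three] using htr
  have hvw' : v 0 * w 0 + v 1 * w 1 + v 2 * w 2 = 0 := by
    simpa [dotProduct, Fin.sum_univ_three] using hvw
  -- basic orthogonality facts
  have hvc : v ⬝ᵥ c = 0 := by
    simp only [hc, dotProduct, Fin.sum_univ_three, Matrix.cons_val_zero, Matrix.cons_val_one,
      Matrix.head_cons, Matrix.cons_val_two, Matrix.tail_cons]
    ring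
  have hwc : w ⬝ᵥ c = 0 := by
    simp only [hc, dotProduct, Fin.sum_univ_three, Matrix.cons_val_zero, Matrix.cons_val_one,
      Matrix.head_cons, Matrix.cons_val_two, Matrix.tail_cons]
    ring
  have hcc : c ⬝ᵥ c = (v ⬝ᵥ v) * (w ⬝ᵥ w) := by
    simp only [hc, dotProduct, Fin.sum_univ_three, Matrix.cons_val_zero, Matrix.cons_val_one,
      Matrix.head_cons, Matrix.cons_val_two, Matrix.tail_cons]
    linear_combination (-(v 0 * w 0) - v 1 * w 1 - v 2 * w 2) * hvw'
  have hnv : 0 < v ⬝ᵥ v := dot_self_pos v hv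
  have hnw : 0 < w ⬝ᵥ w := dot_self_pos w hw
  have hn2pos : 0 < c ⬝ᵥ c := by rw [hcc]; exact mul_pos hnv hnw
  have hcne : c ≠ 0 := by
    intro h
    rw [h] at hn2pos
    simp at hn2pos
  -- scalars
  set A : ℝ := w ⬝ᵥ M.mulVec w with hA
  set B : ℝ := w ⬝ᵥ M.mulVec c with hB
  set C : ℝ := c ⬝ᵥ M.mulVec c with hCdef
  set nv : ℝ := v ⬝ᵥ v
  set n1 : ℝ := w ⬝ᵥ w
  set n2 : ℝ := c ⬝ᵥ c
  -- trace identity: Qv * n1 + A * nv + C = 0, and Qv = 0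
  have hkey : A * nv + C = 0 := by
    have hQv : v ⬝ᵥ M.mulVec v = 0 := hvQ
    simp only [hA, hCdef, hc, dotProduct, Matrix.mulVec, Fin.sum_univ_three, nv, n1,
      Matrix.cons_val_zero, Matrix.cons_val_one, Matrix.head_cons, Matrix.cons_val_two,
      Matrix.tail_cons] at hQv ⊢
    rw [h01, h02, h12] at hQv ⊢
    linear_combination ((v 0^2 + v 1^2 + v 2^2) * (w 0^2 + w 1^2 + w 2^2)) * htr'
      - (w 0^2 + w 1^2 + w 2^2) * hQv
      - (- M 2 2 * v 2 * w 2 + M 2 2 * v 1 * w 1 + M 2 2 * v 0 * w 0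
         - 2 * M 1 2 * v 2 * w 1 - 2 * M 1 2 * v 1 * w 2
         + M 1 1 * v 2 * w 2 - M 1 1 * v 1 * w 1 + M 1 1 * v 0 * w 0
         - 2 * M 0 2 * v 2 * w 0 - 2 * M 0 2 * v 0 * w 2
         - 2 * M 0 1 * v 1 * w 0 - 2 * M 0 1 * v 0 * w 1
         + M 0 0 * v 2 * w 2 + M 0 0 * v 1 * w 1 - M 0 0 * v 0 * w 0) * hvw'
  -- expansion of Q on combinations a•w + b•c
  have hsymmwc : c ⬝ᵥ M.mulVec w = B := by
    simp only [hB, dotProduct, Matrix.mulVec, Fin.sum_univ_three]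
    rw [h01, h02, h12]
    ring
  have hQexp : ∀ a b : ℝ, (a • w + b • c) ⬝ᵥ M.mulVec (a • w + b • c)
      = a^2 * A + 2 * a * b * B + b^2 * C := by
    intro a b
    simp only [Matrix.mulVec_add, Matrix.mulVec_smul, dotProduct_add, add_dotProduct,
      dotProduct_smul, smul_dotProduct, smul_eq_mul]
    rw [show c ⬝ᵥ M.mulVec w = B from hsymmwc]
    rw [← hA, ← hB, ← hCdef]
    ring
  have hdotexp : ∀ a b a' b' : ℝ, (a • w + b • c) ⬝ᵥ (a' • w + b' • c)
      = a * a' * n1 + b * b' * n2 := by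
    intro a b a' b'
    simp only [dotProduct_add, add_dotProduct, dotProduct_smul, smul_dotProduct, smul_eq_mul]
    rw [show c ⬝ᵥ w = 0 from by rw [dotProduct_comm]; exact hwc, hwc]
    ring
  have hvdot : ∀ a b : ℝ, v ⬝ᵥ (a • w + b • c) = 0 := by
    intro a b
    simp only [dotProduct_add, dotProduct_smul, smul_eq_mul, hvw, hvc]
    ring
  have hne : ∀ a b : ℝ, (a * 1 * n1 + b * 0 * n2 ≠ 0) ∨ True → True := fun _ _ _ => trivial
  by_cases hA0 : A = 0
  · -- then C = 0 as well; take w and c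
    have hC0 : C = 0 := by rw [hA0] at hkey; linarith
    exact ⟨w, c, hw, hcne, by rw [← hA, hA0], by rw [← hCdef, hC0], hvw, hvc,
      by rw [dotProduct_comm] at hwc ⊢; exact hwc⟩
  · set t : ℝ := (-B + Real.sqrt (B^2 - A*C)) / A with ht
    have hA2 : 0 < A^2 := by
      rcases lt_or_gt_of_ne hA0 with h | h
      · nlinarith
      · nlinarith
    have hAC : -(A*C) = A^2 * nv := by linear_combination (-A) * hkey
    have hdisc : 0 < B^2 - A*C := by nlinarith [sq_nonneg B, mul_pos hA2 hnv]
    have hsq : Real.sqrt (B^2 - A*C) ^ 2 = B^2 - A*C := Real.sq_sqrt hdisc.le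
    have hroot : A * t^2 + 2 * B * t + C = 0 := by
      have h : A * (A * t^2 + 2 * B * t + C) = 0 := by
        have hAt : A * t = -B + Real.sqrt (B^2 - A*C) := by
          rw [ht]; field_simp
        linear_combination (A*t + B + Real.sqrt (B^2 - A*C)) * hAt + hsq
      rcases mul_eq_zero.mp h with h | h
      · exact absurd h hA0
      · exact h
    refine ⟨t • w + (1:ℝ) • c, (-n2) • w + (t * n1) • c, ?_, ?_, ?_, ?_, hvdot t 1,
      hvdot (-n2) (t * n1), ?_⟩
    · intro h
      have := congrArg (fun x => x ⬝ᵥ c) h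
      simp only [add_dotProduct, smul_dotProduct, smul_eq_mul, zero_dotProduct] at this
      rw [show w ⬝ᵥ c = 0 from hwc] at this
      linarith [this, hn2pos]
    · intro h
      have := congrArg (fun x => x ⬝ᵥ w) h
      simp only [add_dotProduct, smul_dotProduct, smul_eq_mul, zero_dotProduct] at this
      rw [show c ⬝ᵥ w = 0 from by rw [dotProduct_comm]; exact hwc] at this
      nlinarith [this, mul_pos hn2pos hnw]
    · rw [hQexp t 1]; linear_combination hroot
    · rw [hQexp (-n2) (t * n1)]
      have hn2 : n2 = nv * n1 := hcc
      linear_combination (-(n1*n2)) * hroot + (n2 + n1*t^2) * n1 * hkey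
        + (n2 + n1*t^2) * A * hn2
    · rw [hdotexp t 1 (-n2) (t * n1)]; ring
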